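/- Let \ell > 0 and b \ne 0 be integers satisfying \ell^2 + 4b \ge 0, and define the sequence s by s_0 = 0, s_1 = 1, s_j = \ell s_{j-1} + b s_{j-2} for j \ge 2. Set r = \gcd(\ell, b), t = \gcd(\ell^2/r, b/r), and \sigma = r/t. Define the sequence f by f_0 = 0, f_1 = 1, and f_n = (\ell/t) f_{n-1} + (b/t^2) f_{n-2} for n \ge 2. Then: (i) f is an integer sequence; (ii) s_n = t^{n-1} f_n for all n \ge 1; and (iii) \gcd(f_{n+1}, f_n) = \sigma^{\lfloor n/2 \rfloor} for all n \ge 1. -/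

import Mathlib

/-- helper: coprimality is stable under adding a multiple. -/
lemma copr_add_mul_right {x y z : ℤ} (h : IsCoprime x y) : IsCoprime x (y + x * z) := by
  obtain ⟨a, b, hab⟩ := h
  exact ⟨a - b * z, b, by linear_combination hab⟩

lemma copr_add_mul_left {x y z : ℤ} (h : IsCoprime x y) : IsCoprime (x + y * z) y := by
  obtain ⟨a, b, hab⟩ := h
  exact ⟨a, b - a * z, by linear_combination hab⟩

/-- The reduced auxiliary sequence `h`. -/
def hseq (σ γ β : ℤ) : ℕ → ℤ
  | 0 => 0
  | 1 => 1
  | (n + 2) => (if n % 2 = 0 then γ else σ * γ) * hseq σ γ β (n + 1) + β * hseq σ γ β n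

/-- `g n := σ^(n/2) * h n` satisfies the reduced recurrence. -/
lemma grec (σ γ β : ℤ) (n : ℕ) :
    σ ^ ((n + 2) / 2) * hseq σ γ β (n + 2)
      = (σ * γ) * (σ ^ ((n + 1) / 2) * hseq σ γ β (n + 1))
        + (σ * β) * (σ ^ (n / 2) * hseq σ γ β n) := by
  rcases Nat.even_or_odd n with ⟨k, hk⟩ | ⟨k, hk⟩
  · subst hk
    have h1 : (k + k + 2) / 2 = k + 1 := by omega
    have h2 : (k + k + 1) / 2 = k := by omega
    have h3 : (k + k) / 2 = k := by omega
    have h4 : (k + k) % 2 = 0 := by omega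
    rw [show hseq σ γ β (k + k + 2) =
        (if (k + k) % 2 = 0 then γ else σ * γ) * hseq σ γ β (k + k + 1)
          + β * hseq σ γ β (k + k) from rfl, if_pos h4, h1, h2, h3]
    ring
  · subst hk
    have h1 : (2 * k + 1 + 2) / 2 = k + 1 := by omega
    have h2 : (2 * k + 1 + 1) / 2 = k + 1 := by omega
    have h3 : (2 * k + 1) / 2 = k := by omega
    have h4 : (2 * k + 1) % 2 = 1 := by omega
    rw [show hseq σ γ β (2 * k + 1 + 2) =
        (if (2 * k + 1) % 2 = 0 then γ else σ * γ) * hseq σ γ β (2 * k + 1 + 1)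
          + β * hseq σ γ β (2 * k + 1) from rfl,
      if_neg (by omega : ¬ (2 * k + 1) % 2 = 0), h1, h2, h3]
    ring

lemma hseq_copr_beta {σ γ β : ℤ} (hβγ : IsCoprime β γ) (hβσ : IsCoprime β σ) :
    ∀ n, IsCoprime β (hseq σ γ β (n + 1)) := by
  intro n
  induction n using Nat.strong_induction_on with
  | _ n ih =>
    match n with
    | 0 => simpa [hseq] using isCoprime_one_right
    | 1 =>
      have : hseq σ γ β 2 = γ := by simp [hseq]
      rw [this]; exact hβγ
    | (m + 2) =>
      have hc : IsCoprime β (if m % 2 = 0 then γ else σ * γ) := by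
        split
        · exact hβγ
        · exact hβσ.mul_right hβγ
      have h1 : IsCoprime β (hseq σ γ β (m + 2)) := ih (m + 1) (by omega)
      have h2 : IsCoprime β (hseq σ γ β (m + 1)) := ih m (by omega)
      have key : IsCoprime β ((if m % 2 = 0 then γ else σ * γ) * hseq σ γ β (m + 2)) :=
        hc.mul_right h1
      have : hseq σ γ β (m + 3) =
          (if (m + 1) % 2 = 0 then γ else σ * γ) * hseq σ γ β (m + 2)
            + β * hseq σ γ β (m + 1) := rfl
      rw [this]
      have hc' : IsCoprime β ((if (m + 1) % 2 = 0 then γ else σ * γ) * hseq σ γ β (m + 2)) := by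
        refine IsCoprime.mul_right ?_ h1
        split
        · exact hβγ
        · exact hβσ.mul_right hβγ
      exact copr_add_mul_right hc'

lemma hseq_copr_succ {σ γ β : ℤ} (hβγ : IsCoprime β γ) (hβσ : IsCoprime β σ) :
    ∀ n, IsCoprime (hseq σ γ β (n + 1)) (hseq σ γ β n) := by
  intro n
  induction n with
  | zero => simpa [hseq] using isCoprime_one_left
  | succ m ih =>
    have heq : hseq σ γ β (m + 2) =
        β * hseq σ γ β m + hseq σ γ β (m + 1) * (if m % 2 = 0 then γ else σ * γ) := by
      rw [show hseq σ γ β (m + 2) =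
        (if m % 2 = 0 then γ else σ * γ) * hseq σ γ β (m + 1) + β * hseq σ γ β m from rfl]
      ring
    rw [heq]
    have h1 : IsCoprime (β * hseq σ γ β m) (hseq σ γ β (m + 1)) :=
      (hseq_copr_beta hβγ hβσ m).symm.symm.mul_left ih.symm
    exact copr_add_mul_left h1

lemma hseq_copr_sigma {σ γ β : ℤ} (hσβ : IsCoprime σ β) :
    ∀ k, IsCoprime σ (hseq σ γ β (2 * k + 1)) := by
  intro k
  induction k with
  | zero => simpa [hseq] using isCoprime_one_right
  | succ m ih =>
    have heq : hseq σ γ β (2 * (m + 1) + 1) =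
        β * hseq σ γ β (2 * m + 1) + σ * (γ * hseq σ γ β (2 * m + 2)) := by
      have h4 : (2 * m + 1) % 2 = 1 := by omega
      rw [show (2 * (m + 1) + 1) = (2 * m + 1) + 2 from by omega]
      rw [show hseq σ γ β ((2 * m + 1) + 2) =
        (if (2 * m + 1) % 2 = 0 then γ else σ * γ) * hseq σ γ β (2 * m + 2)
          + β * hseq σ γ β (2 * m + 1) from rfl, h4]
      simp only [Nat.one_ne_zero, if_false]
      ring
    rw [heq]
    exact copr_add_mul_right (hσβ.symm.symm.mul_right ih)

/-- With `ℓ > 0`, `b ≠ 0`, `ℓ² + 4b ≥ 0`, `s` as usual,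
`r = gcd(ℓ, b)`, `t = gcd(ℓ²/r, b/r)`, `σ = r/t`, and `f` defined by `f₀ = 0`,
`f₁ = 1`, `fₙ = (ℓ/t) f_{n-1} + (b/t²) f_{n-2}`: (i) `f` is an integer sequence;
(ii) `sₙ = t^(n-1) fₙ` for `n ≥ 1`; (iii) `gcd(f_{n+1}, fₙ) = σ^⌊n/2⌋` for `n ≥ 1`. -/
theorem stmt11 (ℓ b : ℤ) (hℓ : 0 < ℓ) (hb : b ≠ 0) (hD : 0 ≤ ℓ ^ 2 + 4 * b)
    (s : ℕ → ℤ) (hs0 : s 0 = 0) (hs1 : s 1 = 1)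
    (hrec : ∀ j, 2 ≤ j → s j = ℓ * s (j - 1) + b * s (j - 2))
    (r t σ : ℤ) (hr : r = Int.gcd ℓ b) (ht : t = Int.gcd (ℓ ^ 2 / r) (b / r))
    (hσ : σ = r / t)
    (f : ℕ → ℚ) (hf0 : f 0 = 0) (hf1 : f 1 = 1)
    (hfrec : ∀ j, 2 ≤ j →
      f j = ((ℓ : ℚ) / (t : ℚ)) * f (j - 1) + ((b : ℚ) / (t : ℚ) ^ 2) * f (j - 2)) :
    (∀ n, ∃ m : ℤ, f n = (m : ℚ)) ∧
    (∀ n, 1 ≤ n → (s n : ℚ) = (t : ℚ) ^ (n - 1) * f n) ∧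
    (∀ n, 1 ≤ n → ∀ a c : ℤ, f n = (a : ℚ) → f (n + 1) = (c : ℚ) →
      (Int.gcd c a : ℤ) = σ ^ (n / 2)) := by
  -- basic divisibility facts
  have hrl : r ∣ ℓ := hr ▸ Int.gcd_dvd_left _ _
  have hrb : r ∣ b := hr ▸ Int.gcd_dvd_right _ _
  have hrpos : 0 < r := by
    rw [hr]
    have : Int.gcd ℓ b ≠ 0 := fun h => hℓ.ne' (Int.gcd_eq_zero_iff.mp h).1
    exact_mod_cast Nat.pos_of_ne_zero this
  set γ : ℤ := ℓ / r with hγdef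
  have hℓrγ : ℓ = r * γ := (Int.mul_ediv_cancel' hrl).symm
  have hsq : ℓ ^ 2 / r = r * γ ^ 2 := by
    rw [show ℓ ^ 2 = r * (r * γ ^ 2) from by rw [hℓrγ]; ring]
    exact Int.mul_ediv_cancel_left _ hrpos.ne'
  -- coprimality of γ and b/r
  have hgcd1 : Int.gcd γ (b / r) = 1 := by
    have : 0 < Int.gcd ℓ b := by
      rw [← Int.natCast_pos, ← hr]; exact hrpos
    have h := Int.gcd_div_gcd_div_gcd this
    rw [hγdef, hr]
    exact h
  have hcopγ : IsCoprime γ (b / r) := Int.isCoprime_iff_gcd_eq_one.mpr hgcd1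
  -- t facts
  have htd1 : t ∣ r * γ ^ 2 := by rw [← hsq, ht]; exact Int.gcd_dvd_left _ _
  have htd2 : t ∣ b / r := ht ▸ Int.gcd_dvd_right _ _
  have hbr0 : b / r ≠ 0 := by
    intro h
    apply hb
    have := Int.ediv_mul_cancel hrb
    rw [h, zero_mul] at this; exact this.symm
  have htpos : 0 < t := by
    rcases (Int.natCast_nonneg (Int.gcd (ℓ ^ 2 / r) (b / r))).lt_or_eq with h | h
    · rw [ht]; exact_mod_cast h
    · exfalso
      have : Int.gcd (ℓ ^ 2 / r) (b / r) = 0 := by exact_mod_cast h.symm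
      exact hbr0 (Int.gcd_eq_zero_iff.mp this).2
  have hcoptγ : IsCoprime γ t := hcopγ.of_isCoprime_of_dvd_right htd2
  have htr : t ∣ r := by
    have : IsCoprime t (γ ^ 2) := (hcoptγ.symm).pow_right
    exact this.dvd_of_dvd_mul_right htd1
  have hrtσ : r = t * σ := by rw [hσ]; exact (Int.mul_ediv_cancel' htr).symm
  set β : ℤ := b / r / t with hβdef
  have hbrtβ : b / r = t * β := (Int.mul_ediv_cancel' htd2).symm
  have hbfull : b = t ^ 2 * (σ * β) := by
    have h1 : b = r * (b / r) := (Int.mul_ediv_cancel' hrb).symm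
    rw [h1, hbrtβ, hrtσ]; ring
  have hℓfull : ℓ = t * (σ * γ) := by rw [hℓrγ, hrtσ]; ring
  -- key coprimality: gcd(σγ², β) = 1
  have hkey : Int.gcd (σ * γ ^ 2) β = 1 := by
    have h1 : (t.natAbs : ℤ) = t := Int.natAbs_of_nonneg htpos.le
    have h2 : Int.gcd (ℓ ^ 2 / r) (b / r) = t.natAbs := by
      have : (Int.gcd (ℓ ^ 2 / r) (b / r) : ℤ) = (t.natAbs : ℤ) := by rw [← ht, h1]
      exact_mod_cast this
    have h3 : Int.gcd (t * (σ * γ ^ 2)) (t * β) = t.natAbs * Int.gcd (σ * γ ^ 2) β :=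
      Int.gcd_mul_left _ _ _
    have h4 : ℓ ^ 2 / r = t * (σ * γ ^ 2) := by rw [hsq, hrtσ]; ring
    rw [h4, hbrtβ, h3] at h2
    have htn : 0 < t.natAbs := by
      rw [Int.natAbs_pos]; exact htpos.ne'
    exact Nat.eq_of_mul_eq_mul_left htn (by rw [h2, mul_one])
  have hcop : IsCoprime (σ * γ ^ 2) β := Int.isCoprime_iff_gcd_eq_one.mpr hkey
  have hσβ : IsCoprime σ β := hcop.of_mul_left_left
  have hγβ : IsCoprime γ β := by
    have : IsCoprime (γ ^ 2) β := hcop.of_mul_left_right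
    exact (IsCoprime.pow_left_iff (by norm_num : 0 < 2)).mp this
  have hβγ : IsCoprime β γ := hγβ.symm
  have hβσ : IsCoprime β σ := hσβ.symm
  have hσpos : 0 < σ := by
    rcases lt_trichotomy σ 0 with h | h | h
    · exfalso; nlinarith [hrtσ]
    · exfalso; rw [h, mul_zero] at hrtσ; exact hrpos.ne' hrtσ
    · exact h
  -- the integer sequence G
  set G : ℕ → ℤ := fun n => σ ^ (n / 2) * hseq σ γ β n with hGdef
  have hG0 : G 0 = 0 := by simp [hGdef, hseq]
  have hG1 : G 1 = 1 := by simp [hGdef, hseq]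
  have hGrec : ∀ n, G (n + 2) = (σ * γ) * G (n + 1) + (σ * β) * G n := fun n => grec σ γ β n
  have htQ : (t : ℚ) ≠ 0 := by exact_mod_cast htpos.ne'
  -- f = G
  have hfG : ∀ n, f n = (G n : ℚ) := by
    have key : ∀ n, f n = (G n : ℚ) ∧ f (n + 1) = (G (n + 1) : ℚ) := by
      intro n
      induction n with
      | zero => constructor <;> simp [hf0, hf1, hG0, hG1]
      | succ m ih =>
        refine ⟨ih.2, ?_⟩
        have hrec2 := hfrec (m + 2) (by omega)
        simp only [show m + 2 - 1 = m + 1 from by omega, show m + 2 - 2 = m from by omega] at hrec2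
        have hl : ((ℓ : ℚ) / (t : ℚ)) = ((σ * γ : ℤ) : ℚ) := by
          rw [hℓfull]; push_cast; field_simp
        have hbq : ((b : ℚ) / (t : ℚ) ^ 2) = ((σ * β : ℤ) : ℚ) := by
          rw [hbfull]; push_cast; field_simp
        rw [hrec2, hl, hbq, ih.1, ih.2, hGrec m]
        push_cast
        ring
    exact fun n => (key n).1
  refine ⟨fun n => ⟨G n, hfG n⟩, ?_, ?_⟩
  · -- part (ii)
    have hsG : ∀ n, s (n + 1) = t ^ n * G (n + 1) := by
      have key : ∀ n, s (n + 1) = t ^ n * G (n + 1) ∧ s (n + 2) = t ^ (n + 1) * G (n + 2) := by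
        intro n
        induction n with
        | zero =>
          constructor
          · simp [hs1, hG1]
          · have h2 := hrec 2 (by omega)
            norm_num at h2
            rw [h2, hs0, hs1, hGrec 0, hG0, hG1, hℓfull]
            ring
        | succ m ih =>
          refine ⟨ih.2, ?_⟩
          have h3 := hrec (m + 3) (by omega)
          simp only [show m + 3 - 1 = m + 2 from by omega, show m + 3 - 2 = m + 1 from by omega] at h3
          rw [h3, ih.1, ih.2, hGrec (m + 1), hℓfull, hbfull]
          ring
      exact fun n => (key n).1
    intro n hn
    obtain ⟨m, rfl⟩ : ∃ m, n = m + 1 := ⟨n - 1, by omega⟩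
    rw [hfG, hsG m]
    push_cast
    simp
  · -- part (iii)
    intro n hn a c ha hc
    have ha' : a = G n := by
      have : (a : ℚ) = (G n : ℚ) := by rw [← ha, hfG]
      exact_mod_cast this
    have hc' : c = G (n + 1) := by
      have : (c : ℚ) = (G (n + 1) : ℚ) := by rw [← hc, hfG]
      exact_mod_cast this
    subst ha' hc'
    have hσk : ∀ k : ℕ, ((σ ^ k).natAbs : ℤ) = σ ^ k := fun k =>
      Int.natAbs_of_nonneg (pow_nonneg hσpos.le k)
    rcases Nat.even_or_odd n with ⟨k, hk⟩ | ⟨k, hk⟩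
    · -- n = k + k
      subst hk
      have h1 : (k + k + 1) / 2 = k := by omega
      have h2 : (k + k) / 2 = k := by omega
      simp only [hGdef, h1, h2]
      rw [Int.gcd_mul_left]
      have : Int.gcd (hseq σ γ β (k + k + 1)) (hseq σ γ β (k + k)) = 1 :=
        Int.isCoprime_iff_gcd_eq_one.mp (hseq_copr_succ hβγ hβσ (k + k))
      rw [this, mul_one, hσk]
    · -- n = 2k + 1
      subst hk
      have h1 : (2 * k + 1 + 1) / 2 = k + 1 := by omega
      have h2 : (2 * k + 1) / 2 = k := by omega
      simp only [hGdef, h1, h2]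
      have hrw : σ ^ (k + 1) * hseq σ γ β (2 * k + 1 + 1)
          = σ ^ k * (σ * hseq σ γ β (2 * k + 2)) := by ring
      rw [hrw, show σ ^ k * hseq σ γ β (2 * k + 1) = σ ^ k * hseq σ γ β (2 * k + 1) from rfl,
        Int.gcd_mul_left]
      have hcop1 : IsCoprime (σ * hseq σ γ β (2 * k + 2)) (hseq σ γ β (2 * k + 1)) := by
        refine IsCoprime.mul_left ?_ ?_
        · exact (hseq_copr_sigma hσβ k).symm.symm
        · exact hseq_copr_succ hβγ hβσ (2 * k + 1)
      rw [Int.isCoprime_iff_gcd_eq_one.mp hcop1, mul_one, hσk]
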